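/- Let p be a supermodular set-function on a finite set S. If λ ≥ λ', then the smallest maximizer L(λ) of p(X) − λ|X| is contained in the smallest maximizer L(λ') of p(X) − λ'|X|. -/
import Mathlib

open Finset

variable {α : Type*} [Fintype α] [DecidableEq α]

def Supermodular (p : Finset α → EReal) : Prop :=
  ∀ X Y : Finset α, p X + p Y ≤ p (X ∩ Y) + p (X ∪ Y)

/-- `X` maximizes `Z ↦ p(Z) − λ|Z|` over all subsets `Z` of the ground-set. -/
def IsMaximizer (p : Finset α → EReal) (lam : ℝ) (X : Finset α) : Prop :=
  ∀ Y : Finset α,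
    p Y - ((lam * (Y.card : ℝ) : ℝ) : EReal) ≤ p X - ((lam * (X.card : ℝ) : ℝ) : EReal)

/-- `L` is the smallest maximizer of `X ↦ p(X) − λ|X|`. -/
def IsSmallestMaximizer (p : Finset α → EReal) (lam : ℝ) (L : Finset α) : Prop :=
  IsMaximizer p lam L ∧ ∀ X : Finset α, IsMaximizer p lam X → L ⊆ X

/-- If `λ ≥ λ'` then `L(λ) ⊆ L(λ')` for the smallest maximizers. -/
theorem smallest_maximizer_monotone (p : Finset α → EReal) (hp0 : p ∅ = 0)
    (hfin : p (Finset.univ : Finset α) ≠ ⊥) (hsup : Supermodular p)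
    (lam lam' : ℝ) (h : lam' ≤ lam) (L L' : Finset α)
    (hL : IsSmallestMaximizer p lam L) (hL' : IsSmallestMaximizer p lam' L') :
    L ⊆ L' := by
  by_cases htop : ∃ X : Finset α, p X = ⊤
  · obtain ⟨X, hX⟩ := htop
    have h1 := hL'.1 X
    rw [hX, EReal.top_sub_coe, top_le_iff] at h1
    have hL'top : p L' = ⊤ := by
      by_contra hne
      lift p L' to ℝ using ⟨hne, fun hb => by simp [hb] at h1⟩ with b hb
      rw [← EReal.coe_sub] at h1
      exact EReal.coe_ne_top _ h1
    exact hL.2 L' (fun Y => by rw [hL'top, EReal.top_sub_coe]; exact le_top)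
  · push_neg at htop
    have hL0 := hL.1 ∅
    have hL'0 := hL'.1 ∅
    rw [hp0] at hL0 hL'0
    simp only [card_empty, Nat.cast_zero, mul_zero] at hL0 hL'0
    have hpL : p L ≠ ⊥ := by
      intro hb; rw [hb] at hL0; simp [EReal.bot_sub] at hL0
    have hpL' : p L' ≠ ⊥ := by
      intro hb; rw [hb] at hL'0; simp [EReal.bot_sub] at hL'0
    obtain ⟨a, ha⟩ : ∃ a : ℝ, p L = a := ⟨(p L).toReal, (EReal.coe_toReal (htop L) hpL).symm⟩
    obtain ⟨b, hb⟩ : ∃ b : ℝ, p L' = b := ⟨(p L').toReal, (EReal.coe_toReal (htop L') hpL').symm⟩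
    have hs := hsup L L'
    rw [ha, hb, ← EReal.coe_add] at hs
    have hpi : p (L ∩ L') ≠ ⊥ := by
      intro hbot; rw [hbot, EReal.bot_add] at hs; exact (EReal.coe_ne_bot _) (eq_bot_iff.mpr hs)
    have hpu : p (L ∪ L') ≠ ⊥ := by
      intro hbot; rw [hbot, EReal.add_bot] at hs; exact (EReal.coe_ne_bot _) (eq_bot_iff.mpr hs)
    obtain ⟨ci, hci⟩ : ∃ c : ℝ, p (L ∩ L') = c :=
      ⟨(p (L ∩ L')).toReal, (EReal.coe_toReal (htop _) hpi).symm⟩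
    obtain ⟨cu, hcu⟩ : ∃ c : ℝ, p (L ∪ L') = c :=
      ⟨(p (L ∪ L')).toReal, (EReal.coe_toReal (htop _) hpu).symm⟩
    rw [hci, hcu, ← EReal.coe_add, EReal.coe_le_coe_iff] at hs
    have h1 := hL'.1 (L ∪ L')
    rw [hb, hcu, ← EReal.coe_sub, ← EReal.coe_sub, EReal.coe_le_coe_iff] at h1
    have hcard : (L ∩ L').card + (L ∪ L').card = L.card + L'.card :=
      card_inter_add_card_union L L'
    have hcard' : L'.card ≤ (L ∪ L').card := card_le_card subset_union_right
    have key : a - lam * L.card ≤ ci - lam * (L ∩ L').card := by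
      have hmul : 0 ≤ (lam - lam') * ((L ∪ L').card - L'.card : ℝ) := by
        apply mul_nonneg (by linarith)
        have : (L'.card : ℝ) ≤ (L ∪ L').card := Nat.cast_le.mpr hcard'
        linarith
      have hc : ((L ∩ L').card : ℝ) + (L ∪ L').card = L.card + L'.card := by
        exact_mod_cast hcard
      have hc2 : lam * ((L ∩ L').card : ℝ)
          = lam * L.card + lam * L'.card - lam * (L ∪ L').card := by
        linear_combination lam * hc
      linarith [hs, h1, hmul, hc2]
    have hmax : IsMaximizer p lam (L ∩ L') := by
      intro Y
      refine (hL.1 Y).trans ?_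
      rw [ha, hci, ← EReal.coe_sub, ← EReal.coe_sub, EReal.coe_le_coe_iff]
      exact key
    exact (hL.2 _ hmax).trans inter_subset_right
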